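/- Let (M,ρ) be a metric space, X a compact metric space, and for each y ∈ Y (a metric space), g ∈ C(X,M), ε > 0: let F(g,ε,y) denote the union of all continua C of diameter ≥ ε contained in f⁻¹(y) ∩ g⁻¹(z) for some point z ∈ M, where f : X → Y is a perfect map. Then F(g,ε,y) is a closed (hence compact) subset of f⁻¹(y). -/

import Mathlib

open Metric Set Filter Topology

/-- A Hausdorff limit of preconnected sets is preconnected (when the limit is compact). -/
lemma preconn_of_hausdorff_lim {X : Type*} [MetricSpace X] {C : ℕ → Set X} {K : Set X}
    (hCconn : ∀ n, IsPreconnected (C n))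
    (hK : IsCompact K)
    (hfin : ∀ n, EMetric.hausdorffEdist (C n) K ≠ ⊤)
    (hd : Tendsto (fun n => hausdorffDist (C n) K) atTop (𝓝 0)) :
    IsPreconnected K := by
  rw [isPreconnected_iff_subset_of_fully_disjoint_closed hK.isClosed]
  intro t t' ht ht' hcover hdisj
  by_contra hcon
  push_neg at hcon
  obtain ⟨hnt, hnt'⟩ := hcon
  have hAne : (K ∩ t).Nonempty := by
    obtain ⟨p, hpK, hpt'⟩ := not_subset.1 hnt'
    exact ⟨p, hpK, (hcover hpK).resolve_right hpt'⟩
  have hBne : (K ∩ t').Nonempty := by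
    obtain ⟨p, hpK, hpt⟩ := not_subset.1 hnt
    exact ⟨p, hpK, (hcover hpK).resolve_left hpt⟩
  have hAB : Disjoint (K ∩ t) (K ∩ t') :=
    hdisj.mono inter_subset_right inter_subset_right
  obtain ⟨δ, hδ, hthick⟩ :=
    hAB.exists_thickenings (hK.inter_right ht) ((hK.inter_right ht').isClosed)
  obtain ⟨n, hn⟩ := (hd.eventually (gt_mem_nhds hδ)).exists
  have hsub : C n ⊆ thickening δ (K ∩ t) ∪ thickening δ (K ∩ t') := by
    intro x hx
    obtain ⟨k, hkK, hdk⟩ := exists_dist_lt_of_hausdorffDist_lt hx hn (hfin n)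
    rcases hcover hkK with h | h
    · exact Or.inl (mem_thickening_iff.2 ⟨k, ⟨hkK, h⟩, hdk⟩)
    · exact Or.inr (mem_thickening_iff.2 ⟨k, ⟨hkK, h⟩, hdk⟩)
  have hmeetsA : (C n ∩ thickening δ (K ∩ t)).Nonempty := by
    obtain ⟨a, haK, hat⟩ := hAne
    obtain ⟨c, hc, hdc⟩ := exists_dist_lt_of_hausdorffDist_lt' haK hn (hfin n)
    exact ⟨c, hc, mem_thickening_iff.2 ⟨a, ⟨haK, hat⟩, hdc⟩⟩
  have hmeetsB : (C n ∩ thickening δ (K ∩ t')).Nonempty := by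
    obtain ⟨b, hbK, hbt⟩ := hBne
    obtain ⟨c, hc, hdc⟩ := exists_dist_lt_of_hausdorffDist_lt' hbK hn (hfin n)
    exact ⟨c, hc, mem_thickening_iff.2 ⟨b, ⟨hbK, hbt⟩, hdc⟩⟩
  obtain ⟨p, -, hpA, hpB⟩ :=
    hCconn n _ _ isOpen_thickening isOpen_thickening hsub hmeetsA hmeetsB
  exact hthick.le_bot ⟨hpA, hpB⟩

/-- `LelekUnion f g ε y` is the set `F(g,ε,y)`: the union of all continua `C` of
diameter `≥ ε` contained in `f⁻¹(y)` on which `g` is constant. -/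
def LelekUnion {X Y M : Type*} [MetricSpace X] [MetricSpace Y] [MetricSpace M]
    (f : C(X, Y)) (g : C(X, M)) (ε : ℝ) (y : Y) : Set X :=
  ⋃₀ {C : Set X | IsCompact C ∧ IsConnected C ∧ ε ≤ Metric.diam C ∧
      C ⊆ ⇑f ⁻¹' {y} ∧ ∃ z : M, C ⊆ ⇑g ⁻¹' {z}}

/-- For a perfect map `f : X → Y` from a compact metric space and any
`g ∈ C(X,M)`, `ε > 0`, `y ∈ Y`, the set `F(g,ε,y)` is a closed (hence compact)
subset of the fiber `f⁻¹(y)`. -/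
theorem stmt19 {X Y M : Type*} [MetricSpace X] [CompactSpace X]
    [MetricSpace Y] [MetricSpace M]
    (f : C(X, Y)) (hclosed : IsClosedMap ⇑f)
    (hcompfib : ∀ y : Y, IsCompact (⇑f ⁻¹' {y}))
    (g : C(X, M)) (ε : ℝ) (hε : 0 < ε) (y : Y) :
    IsClosed (LelekUnion f g ε y) ∧ IsCompact (LelekUnion f g ε y) ∧
      LelekUnion f g ε y ⊆ ⇑f ⁻¹' {y} := by
  have hsubfib : LelekUnion f g ε y ⊆ ⇑f ⁻¹' {y} := by
    rintro x ⟨C, ⟨-, -, -, hCf, -⟩, hxC⟩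
    exact hCf hxC
  have hclosedF : IsClosed (LelekUnion f g ε y) := by
    refine IsSeqClosed.isClosed ?_
    intro x a hx hxa
    simp only [LelekUnion, mem_sUnion, mem_setOf_eq] at hx ⊢
    choose C hCS hxC using hx
    have hCc : ∀ n, IsCompact (C n) := fun n => (hCS n).1
    have hCconn : ∀ n, IsPreconnected (C n) := fun n => ((hCS n).2.1).2
    have hCdiam : ∀ n, ε ≤ diam (C n) := fun n => (hCS n).2.2.1
    have hCf : ∀ n, C n ⊆ ⇑f ⁻¹' {y} := fun n => (hCS n).2.2.2.1
    choose z hz using fun n => (hCS n).2.2.2.2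
    have hCne : ∀ n, (C n).Nonempty := fun n => ⟨x n, hxC n⟩
    -- pass to the hyperspace of nonempty compacts
    set Kn : ℕ → TopologicalSpace.NonemptyCompacts X :=
      fun n => ⟨⟨C n, hCc n⟩, hCne n⟩ with hKn
    obtain ⟨L, -, φ, hφ, hL⟩ :=
      isCompact_univ.tendsto_subseq (x := Kn) (fun n => mem_univ _)
    set K : Set X := (L : Set X) with hKdef
    have hK : IsCompact K := L.isCompact
    have hKne : K.Nonempty := L.nonempty
    have hdist : Tendsto (fun n => hausdorffDist (C (φ n)) K) atTop (𝓝 0) := by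
      have := tendsto_iff_dist_tendsto_zero.1 hL
      simp only [Metric.NonemptyCompacts.dist_eq] at this; exact this
    have hfin : ∀ n, EMetric.hausdorffEdist (C (φ n)) K ≠ ⊤ := fun n =>
      Metric.hausdorffEdist_ne_top_of_nonempty_of_bounded (hCne (φ n)) hKne
        (hCc (φ n)).isBounded hK.isBounded
    have hfin' : ∀ n, EMetric.hausdorffEdist K (C (φ n)) ≠ ⊤ := fun n => by
      show Metric.hausdorffEDist K (C (φ n)) ≠ ⊤
      rw [EMetric.hausdorffEdist_comm]; exact hfin n
    -- approximation of points of K by points of the continua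
    have haux : ∀ p ∈ K, ∃ u : ℕ → X, (∀ n, u n ∈ C (φ n)) ∧ Tendsto u atTop (𝓝 p) := by
      intro p hp
      have h1 : ∀ n, ∃ q ∈ C (φ n), infDist p (C (φ n)) = dist p q :=
        fun n => (hCc (φ n)).exists_infDist_eq_dist (hCne (φ n)) p
      choose u hu hud using h1
      refine ⟨u, hu, ?_⟩
      rw [tendsto_iff_dist_tendsto_zero]
      refine squeeze_zero (fun n => dist_nonneg) (fun n => ?_) hdist
      rw [dist_comm, ← hud n, hausdorffDist_comm]
      exact infDist_le_hausdorffDist_of_mem hp (hfin' n)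
    -- the limit point belongs to K
    have hxφa : Tendsto (fun n => x (φ n)) atTop (𝓝 a) := hxa.comp hφ.tendsto_atTop
    have haK : a ∈ K := by
      have hb : ∀ n, infDist a K ≤ hausdorffDist (C (φ n)) K + dist (x (φ n)) a := by
        intro n
        calc infDist a K ≤ infDist (x (φ n)) K + dist a (x (φ n)) :=
              infDist_le_infDist_add_dist
          _ ≤ hausdorffDist (C (φ n)) K + dist (x (φ n)) a := by
              rw [dist_comm]
              gcongr
              exact infDist_le_hausdorffDist_of_mem (hxC (φ n)) (hfin n)
      have h0 : Tendsto (fun n => hausdorffDist (C (φ n)) K + dist (x (φ n)) a)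
          atTop (𝓝 0) := by
        simpa using hdist.add (tendsto_iff_dist_tendsto_zero.1 hxφa)
      have hle : infDist a K ≤ 0 := ge_of_tendsto' h0 hb
      have : infDist a K = 0 := le_antisymm hle infDist_nonneg
      exact (hK.isClosed.mem_iff_infDist_zero hKne).2 this
    -- diameter bound
    have hdiam : ε ≤ diam K := by
      refine le_of_forall_pos_le_add ?_
      intro η hη
      obtain ⟨n, hn⟩ := (hdist.eventually (gt_mem_nhds (half_pos hη))).exists
      have hbound : diam (C (φ n)) ≤ diam K + η := by
        refine diam_le_of_forall_dist_le (by positivity) ?_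
        intro p hp q hq
        obtain ⟨p', hp', hpd⟩ := exists_dist_lt_of_hausdorffDist_lt hp hn (hfin n)
        obtain ⟨q', hq', hqd⟩ := exists_dist_lt_of_hausdorffDist_lt hq hn (hfin n)
        calc dist p q ≤ dist p p' + dist p' q' + dist q' q := dist_triangle4 p p' q' q
          _ ≤ η / 2 + diam K + η / 2 := by
              have := dist_le_diam_of_mem hK.isBounded hp' hq'
              rw [dist_comm q' q]
              have h1 := hpd.le
              have h2 := hqd.le
              linarith
          _ = diam K + η := by ring
      exact (hCdiam (φ n)).trans hbound
    -- K sits in the fiber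
    have hKf : K ⊆ ⇑f ⁻¹' {y} := by
      intro p hp
      obtain ⟨u, huC, hup⟩ := haux p hp
      have h1 : Tendsto (fun n => f (u n)) atTop (𝓝 (f p)) :=
        (f.continuous.tendsto p).comp hup
      have h2 : (fun n => f (u n)) = fun _ => y :=
        funext fun n => hCf (φ n) (huC n)
      rw [h2] at h1
      exact mem_preimage.2 (mem_singleton_iff.2 (tendsto_nhds_unique h1 tendsto_const_nhds))
    -- g is constant on K
    obtain ⟨v, hvC, hva⟩ := haux a haK
    have hKg : K ⊆ ⇑g ⁻¹' {g a} := by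
      intro p hp
      obtain ⟨u, huC, hup⟩ := haux p hp
      have h1 : Tendsto (fun n => g (u n)) atTop (𝓝 (g p)) :=
        (g.continuous.tendsto p).comp hup
      have h2 : Tendsto (fun n => g (v n)) atTop (𝓝 (g a)) :=
        (g.continuous.tendsto a).comp hva
      have heq : (fun n => g (u n)) = fun n => g (v n) := funext fun n => by
        rw [mem_singleton_iff.1 (hz (φ n) (huC n)), mem_singleton_iff.1 (hz (φ n) (hvC n))]
      rw [heq] at h1
      exact mem_preimage.2 (mem_singleton_iff.2 (tendsto_nhds_unique h1 h2))
    -- connectedness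
    have hKconn : IsPreconnected K :=
      preconn_of_hausdorff_lim (fun n => hCconn (φ n)) hK hfin hdist
    exact ⟨K, ⟨hK, ⟨hKne, hKconn⟩, hdiam, hKf, ⟨g a, hKg⟩⟩, haK⟩
  exact ⟨hclosedF, hclosedF.isCompact, hsubfib⟩
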